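/- Let w₀ be an admissible multidegree on (Γ, 𝐧), for each v ∈ V(Γ) let w_v ∈ V(G(w₀)) be concentrated at v, and let w ∈ V(G(w₀)). Then the function D_{w,v}, defined from any path P(w, v₁, …, v_m) in G(w₀) from w to w_v, is independent of the choice of path from w to w_v. -/

import Mathlib

open scoped Classical

namespace LLS

variable {V E : Type*}

/-- `σ(e,v)`: `1` if `v` is the tail of `e`, `-1` if `v` is the head of `e`, `0` otherwise. -/
noncomputable def sigma (tail head : E → V) (e : E) (v : V) : ℤ :=
  if tail e = v then 1 else if head e = v then -1 else 0

/-- The endpoint of `e` other than `v` (for `e` adjacent to `v`). -/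
noncomputable def otherEnd (tail head : E → V) (e : E) (v : V) : V :=
  if tail e = v then head e else tail e

/-- The multigraph is loopless. -/
def Loopless (tail head : E → V) : Prop := ∀ e, tail e ≠ head e

/-- The multigraph is connected. -/
def MGConnected (tail head : E → V) : Prop :=
  ∀ u v : V, Relation.ReflTransGen
    (fun a b => ∃ e, (tail e = a ∧ head e = b) ∨ (tail e = b ∧ head e = a)) u v

/-- An admissible multidegree on `(Γ, 𝐧)`: a function `V(Γ) → ℤ` together with an
element `μ(e) ∈ ℤ/𝐧(e)ℤ` for each edge `e`. -/
structure AdmMD (V E : Type*) (n : E → ℕ) where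
  wV : V → ℤ
  mu : ∀ e : E, ZMod (n e)

section FinGraph

variable [Fintype V] [Fintype E] [DecidableEq V] [DecidableEq E]

/-- The twist of an admissible multidegree at a vertex `v`. -/
noncomputable def twist (tail head : E → V) (n : E → ℕ) (w : AdmMD V E n) (v : V) :
    AdmMD V E n where
  wV u := w.wV u
    - (if u = v then ((Finset.univ.filter fun e : E =>
        sigma tail head e v ≠ 0 ∧ w.mu e = 0).card : ℤ) else 0)
    + ((Finset.univ.filter fun e : E => sigma tail head e v ≠ 0 ∧
        w.mu e + (sigma tail head e v : ZMod (n e)) = 0 ∧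
        otherEnd tail head e v = u).card : ℤ)
  mu e := w.mu e + (sigma tail head e v : ZMod (n e))

/-- The negative twist of an admissible multidegree at a vertex `v`
(the inverse of `twist`). -/
noncomputable def negTwist (tail head : E → V) (n : E → ℕ) (w : AdmMD V E n) (v : V) :
    AdmMD V E n where
  wV u := w.wV u
    + (if u = v then ((Finset.univ.filter fun e : E => sigma tail head e v ≠ 0 ∧
        w.mu e - (sigma tail head e v : ZMod (n e)) = 0).card : ℤ) else 0)
    - ((Finset.univ.filter fun e : E => sigma tail head e v ≠ 0 ∧
        w.mu e = 0 ∧ otherEnd tail head e v = u).card : ℤ)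
  mu e := w.mu e - (sigma tail head e v : ZMod (n e))

/-- An admissible multidegree is concentrated at `v` if there is an ordering of all
vertices starting with `v` such that composing the negative twists at all previous
vertices makes the multidegree negative at each subsequent vertex. -/
def Concentrated (tail head : E → V) (n : E → ℕ) (w : AdmMD V E n) (v : V) : Prop :=
  ∃ l : List V, l.Nodup ∧ (∀ x : V, x ∈ l) ∧ l.head? = some v ∧
    ∀ (i : ℕ) (h : i < l.length), 0 < i →
      (((l.take i).foldl (negTwist tail head n) w).wV (l.get ⟨i, h⟩)) < 0

/-- `w` is obtained from `w₀` by a finite sequence of twists, i.e. `w ∈ V(G(w₀))`. -/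
def TwistSeq (tail head : E → V) (n : E → ℕ) (w₀ w : AdmMD V E n) : Prop :=
  ∃ l : List V, l.foldl (twist tail head n) w₀ = w

/-- `l` records the successive twist vertices of a minimal path from `w` to `w'`
in `G(w₀)`. -/
def IsMinPath (tail head : E → V) (n : E → ℕ) (w w' : AdmMD V E n) (l : List V) : Prop :=
  l.foldl (twist tail head n) w = w' ∧
    ∀ l' : List V, l'.foldl (twist tail head n) w = w' → l.length ≤ l'.length

/-- The membership condition describing the subgraph `Ḡ(w₀)` of `G(w₀)`:
no minimal path from `w` to `w_v` involves twisting at `v`. -/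
def InBarG (tail head : E → V) (n : E → ℕ) (w₀ : AdmMD V E n) (wv : V → AdmMD V E n)
    (w : AdmMD V E n) : Prop :=
  TwistSeq tail head n w₀ w ∧
    ∀ (v : V) (l : List V), IsMinPath tail head n w (wv v) l → v ∉ l

/-- Edges joining `v` and `u`. -/
noncomputable def edgesBetween (tail head : E → V) (v u : V) : Finset E :=
  Finset.univ.filter fun e => (tail e = v ∧ head e = u) ∨ (head e = v ∧ tail e = u)

/-- Edges adjacent to `v`. -/
noncomputable def edgesAdj (tail head : E → V) (v : V) : Finset E :=
  Finset.univ.filter fun e => tail e = v ∨ head e = v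

/-- The change of a divisor effected by a single chip-firing move at `v`. -/
noncomputable def fireDelta (tail head : E → V) (v : V) : V → ℤ := fun u =>
  ((edgesBetween tail head v u).card : ℤ)
    - (if u = v then ((edgesAdj tail head v).card : ℤ) else 0)

/-- A chip-firing move (twist) at `v`. -/
noncomputable def chipFire (tail head : E → V) (D : V → ℤ) (v : V) : V → ℤ :=
  fun u => D u + fireDelta tail head v u

/-- The inverse of a chip-firing move at `v`. -/
noncomputable def negChipFire (tail head : E → V) (D : V → ℤ) (v : V) : V → ℤ :=
  fun u => D u - fireDelta tail head v u

/-- A divisor (multidegree) on a graph is concentrated at `v`. -/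
def ConcentratedDiv (tail head : E → V) (D : V → ℤ) (v : V) : Prop :=
  ∃ l : List V, l.Nodup ∧ (∀ x : V, x ∈ l) ∧ l.head? = some v ∧
    ∀ (i : ℕ) (h : i < l.length), 0 < i →
      (((l.take i).foldl (negChipFire tail head) D) (l.get ⟨i, h⟩)) < 0

/-- A divisor on a graph is `v₀`-reduced. -/
def VReduced (tail head : E → V) (D : V → ℤ) (v₀ : V) : Prop :=
  (∀ u, u ≠ v₀ → 0 ≤ D u) ∧
    ∀ S : Finset V, S.Nonempty → v₀ ∉ S →
      ∃ v ∈ S, D v < ((Finset.univ.filter fun e : E =>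
        (tail e = v ∧ head e ∉ S) ∨ (head e = v ∧ tail e ∉ S)).card : ℤ)

/-- The function `D_{w,v}` on edges of `Γ` determined by a path `l` from `w` to `w_v`. -/
noncomputable def DFun (tail head : E → V) (n : E → ℕ) (w : AdmMD V E n) (l : List V)
    (v : V) (et : E) : ℤ :=
  (((Finset.univ : Finset (Fin l.length)).filter fun j =>
      l.get j = otherEnd tail head et v ∧
        ((l.take (j.val + 1)).foldl (twist tail head n) w).mu et = 0).card : ℤ)
  - (((Finset.univ : Finset (Fin l.length)).filter fun j =>
      l.get j = v ∧ ((l.take j.val).foldl (twist tail head n) w).mu et = 0).card : ℤ)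

end FinGraph

/-- The tail map of the subdivided graph `Γ̃`: the edge `e` of `Γ` is subdivided into
`𝐧(e)` edges `(e, j)`, `j = 0, …, 𝐧(e) - 1`, numbered from the tail of `e`; the new
vertices over `e` are `(e, i)`, `i = 0, …, 𝐧(e) - 2`, with `(e, i)` being the
`(i+1)`-st new vertex from the tail of `e`. -/
def tailT (tail head : E → V) (n : E → ℕ) :
    (Σ e : E, Fin (n e)) → V ⊕ Σ e : E, Fin (n e - 1) := fun p =>
  if h : p.2.val = 0 then Sum.inl (tail p.1)
  else Sum.inr ⟨p.1, ⟨p.2.val - 1, by have := p.2.isLt; omega⟩⟩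

/-- The head map of the subdivided graph `Γ̃`. -/
def headT (tail head : E → V) (n : E → ℕ) :
    (Σ e : E, Fin (n e)) → V ⊕ Σ e : E, Fin (n e - 1) := fun p =>
  if h : p.2.val = n p.1 - 1 then Sum.inl (head p.1)
  else Sum.inr ⟨p.1, ⟨p.2.val, by have := p.2.isLt; omega⟩⟩

/-- The multidegree on the subdivided graph `Γ̃` induced by an admissible multidegree:
it agrees with `w` on old vertices, is `1` on the `μ(e)`-th new vertex over `e`
when `μ(e) ≠ 0`, and is `0` on all other new vertices. -/
noncomputable def inducedMD (n : E → ℕ) (w : AdmMD V E n) :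
    (V ⊕ Σ e : E, Fin (n e - 1)) → ℤ
  | Sum.inl v => w.wV v
  | Sum.inr ⟨e, i⟩ => if (w.mu e).val = i.val + 1 then 1 else 0

/-- The simple graph `Γ̄` associated to the multigraph `Γ`: same vertices, one edge
between each pair of adjacent vertices. -/
def barGraph (tail head : E → V) : SimpleGraph V where
  Adj u v := u ≠ v ∧ ∃ e, (tail e = u ∧ head e = v) ∨ (tail e = v ∧ head e = u)
  symm := by
    constructor
    intro u v h
    exact ⟨h.1.symm, h.2.imp fun e he => he.symm⟩
  loopless := ⟨fun u h => h.1 rfl⟩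



/-! ### Auxiliary lemmas for statement 12 -/

section Aux12

lemma zmod_val_add_one {m : ℕ} (hm : 0 < m) (μ : ZMod m) :
    (((μ + 1 : ZMod m)).val : ℤ) = (μ.val : ℤ) + 1 - m * (if μ + 1 = 0 then 1 else 0) := by
  haveI : NeZero m := ⟨hm.ne'⟩
  rcases eq_or_lt_of_le (Nat.succ_le_of_lt hm) with h1 | h2
  · have hm1 : m = 1 := h1.symm
    subst hm1
    have h0 : μ = 0 := Subsingleton.elim _ _
    have h0' : μ + 1 = 0 := Subsingleton.elim _ _
    rw [h0', if_pos rfl, h0, ZMod.val_zero]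
    norm_num
  · have hneg1 : ((-1 : ZMod m)).val = m - 1 := by
      have e1 : ((m - 1 : ℕ) : ZMod m) = -1 := by
        push_cast [Nat.cast_sub hm]
        simp [ZMod.natCast_self]
      rw [← e1, ZMod.val_natCast_of_lt (by omega)]
    by_cases h : μ + 1 = 0
    · have hμ : μ = -1 := by linear_combination h
      rw [if_pos h, h, hμ, ZMod.val_zero, hneg1]
      push_cast [Nat.cast_sub hm]
      ring
    · rw [if_neg h]
      have hμne : μ.val ≠ m - 1 := by
        intro hc
        apply h
        have hv : μ = ((μ.val : ℕ) : ZMod m) := by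
          rw [ZMod.natCast_val, ZMod.cast_id]
        rw [hv, hc]
        push_cast [Nat.cast_sub hm]
        simp [ZMod.natCast_self]
      have hlt : μ.val + 1 < m := by have := μ.val_lt; omega
      have h1v : (1 : ZMod m).val = 1 := by
        rw [ZMod.val_one_eq_one_mod, Nat.mod_eq_of_lt h2]
      rw [ZMod.val_add_of_lt (by omega)]
      push_cast [h1v]
      ring

lemma zmod_val_sub_one {m : ℕ} (hm : 0 < m) (μ : ZMod m) :
    (((μ - 1 : ZMod m)).val : ℤ) = (μ.val : ℤ) - 1 + m * (if μ = 0 then 1 else 0) := by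
  have h := zmod_val_add_one hm (μ - 1)
  rw [sub_add_cancel] at h
  rw [h]; ring

lemma sigma_cases (tail head : E → V) (e : E) (x : V) :
    (tail e = x ∧ sigma tail head e x = 1) ∨
    (tail e ≠ x ∧ head e = x ∧ sigma tail head e x = -1) ∨
    (tail e ≠ x ∧ head e ≠ x ∧ sigma tail head e x = 0) := by
  unfold sigma
  by_cases h1 : tail e = x
  · exact Or.inl ⟨h1, by simp [h1]⟩
  · by_cases h2 : head e = x
    · exact Or.inr (Or.inl ⟨h1, h2, by simp [h1, h2]⟩)
    · exact Or.inr (Or.inr ⟨h1, h2, by simp [h1, h2]⟩)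

section FG

variable [Fintype V] [Fintype E] [DecidableEq V] [DecidableEq E]

lemma DFun_nil (tail head : E → V) (n : E → ℕ) (w : AdmMD V E n) (v : V) (et : E) :
    DFun tail head n w [] v et = 0 := by
  simp [DFun]

lemma DFun_cons (tail head : E → V) (n : E → ℕ) (w : AdmMD V E n) (x : V) (l : List V)
    (v : V) (et : E) :
    DFun tail head n w (x :: l) v et =
      ((if x = otherEnd tail head et v ∧ (twist tail head n w x).mu et = 0 then (1:ℤ) else 0)
        - (if x = v ∧ w.mu et = 0 then (1:ℤ) else 0))
      + DFun tail head n (twist tail head n w x) l v et := by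
  unfold DFun
  rw [Finset.card_filter, Finset.card_filter, Finset.card_filter, Finset.card_filter]
  push_cast
  simp only [List.length_cons]
  rw [Fin.sum_univ_succ, Fin.sum_univ_succ]
  have hg : ∀ i : Fin l.length, (x :: l).get i.succ = l.get i := fun i => rfl
  simp only [hg, List.get_cons_succ, Fin.val_succ, Fin.val_zero,
    List.take_succ_cons, List.foldl_cons, List.get_cons_zero, List.take_zero,
    List.foldl_nil, List.take_cons, zero_add]
  exact (by intros; ring : ∀ a b c d : ℤ, (a + b) - (c + d) = (a - c) + (b - d)) _ _ _ _


noncomputable def psiAux (tail head : E → V) (n : E → ℕ) (et : E) (v : V)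
    (μ : ZMod (n et)) : ℤ :=
  ((((sigma tail head et v : ℤ) : ZMod (n et)) * μ - 1).val : ℤ)

lemma endpoint_facts (tail head : E → V) (hloop : Loopless tail head) (et : E) (v : V)
    (hadj : tail et = v ∨ head et = v) :
    otherEnd tail head et v ≠ v ∧
    ∃ s : ℤ, s * s = 1 ∧ sigma tail head et v = s ∧
      sigma tail head et (otherEnd tail head et v) = -s ∧
      (∀ y, y ≠ v → y ≠ otherEnd tail head et v → sigma tail head et y = 0) := by
  have hl := hloop et
  by_cases h : tail et = v
  · have hu : otherEnd tail head et v = head et := by unfold otherEnd; rw [if_pos h]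
    have huv : otherEnd tail head et v ≠ v := by
      rw [hu]
      intro hc
      exact hl (h.trans hc.symm)
    refine ⟨huv, 1, by ring, ?_, ?_, ?_⟩
    · unfold sigma; rw [if_pos h]
    · rw [hu]; unfold sigma; rw [if_neg hl, if_pos rfl]
    · intro y hyv hyu
      unfold sigma
      rw [if_neg (show ¬ (tail et = y) from fun hc => hyv (hc.symm.trans h)),
        if_neg (show ¬ (head et = y) from fun hc => hyu (by rw [hu, hc]))]
  · have hh : head et = v := hadj.resolve_left h
    have hu : otherEnd tail head et v = tail et := by unfold otherEnd; rw [if_neg h]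
    have huv : otherEnd tail head et v ≠ v := by rw [hu]; exact h
    refine ⟨huv, -1, by ring, ?_, ?_, ?_⟩
    · unfold sigma; rw [if_neg h, if_pos hh]
    · rw [hu]; unfold sigma; rw [if_pos rfl]; ring
    · intro y hyv hyu
      unfold sigma
      rw [if_neg (show ¬ (tail et = y) from fun hc => hyu (by rw [hu, hc])),
        if_neg (show ¬ (head et = y) from fun hc => hyv (hc.symm.trans hh))]

section FG2

variable [Fintype V] [Fintype E] [DecidableEq V] [DecidableEq E]

lemma twist_mu (tail head : E → V) (n : E → ℕ) (w : AdmMD V E n) (x : V) (e : E) :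
    (twist tail head n w x).mu e = w.mu e + ((sigma tail head e x : ℤ) : ZMod (n e)) := rfl

lemma lemB_step (tail head : E → V) (n : E → ℕ)
    (hloop : Loopless tail head) (hn : ∀ e, 0 < n e) (et : E) (v : V)
    (hadj : tail et = v ∨ head et = v) (w : AdmMD V E n) (x : V) :
    (n et : ℤ) * ((if x = otherEnd tail head et v ∧ (twist tail head n w x).mu et = 0
          then (1:ℤ) else 0)
        - (if x = v ∧ w.mu et = 0 then (1:ℤ) else 0))
    = psiAux tail head n et v ((twist tail head n w x).mu et)
      - psiAux tail head n et v (w.mu et)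
      - ((if x = v then (1:ℤ) else 0) - (if x = otherEnd tail head et v then (1:ℤ) else 0)) := by
  obtain ⟨huv, s, hs2, hsv, hsu, hs0⟩ := endpoint_facts tail head hloop et v hadj
  set u := otherEnd tail head et v with hu
  have hm0 : 0 < n et := hn et
  set μ := w.mu et with hμdef
  set sb : ZMod (n et) := ((s : ℤ) : ZMod (n et)) with hsb
  have hsb2 : sb * sb = 1 := by
    rw [hsb, ← Int.cast_mul, hs2, Int.cast_one]
  have hpsiv : (((sigma tail head et v : ℤ) : ZMod (n et))) = sb := by rw [hsv]
  by_cases hxv : x = v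
  · have hxu : ¬ x = u := by rw [hxv]; exact fun hc => huv hc.symm
    have hmu : (twist tail head n w x).mu et = μ + sb := by
      rw [twist_mu, hxv, hsv]
    have he1 : sb * (μ + sb) - 1 = (sb * μ - 1) + 1 := by linear_combination hsb2
    have he2 : sb * μ - 1 + 1 = 0 ↔ μ = 0 := by
      constructor
      · intro h
        have h' : sb * μ = 0 := by linear_combination h
        have h'' := congrArg (sb * ·) h'
        simpa [← mul_assoc, hsb2] using h''
      · intro h; rw [h]; ring
    unfold psiAux
    rw [hmu, hpsiv, he1, zmod_val_add_one hm0]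
    rw [if_neg (show ¬ (x = u ∧ μ + sb = 0) from fun hc => hxu hc.1), if_pos hxv, if_neg hxu]
    by_cases h0 : μ = 0
    · rw [if_pos (show x = v ∧ μ = 0 from ⟨hxv, h0⟩),
        if_pos (show sb * μ - 1 + 1 = 0 from he2.mpr h0)]
      push_cast; ring
    · rw [if_neg (show ¬ (x = v ∧ μ = 0) from fun hc => h0 hc.2),
        if_neg (show ¬ (sb * μ - 1 + 1 = 0) from fun hc => h0 (he2.mp hc))]
      push_cast; ring
  · by_cases hxu : x = u
    · have hmu : (twist tail head n w x).mu et = μ - sb := by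
        rw [twist_mu, hxu, hsu]
        push_cast
        ring
      have he1 : sb * (μ - sb) - 1 = (sb * μ - 1) - 1 := by linear_combination -hsb2
      have he2 : μ - sb = 0 ↔ sb * μ - 1 = 0 := by
        constructor
        · intro h
          have h' : μ = sb := by linear_combination h
          rw [h']; linear_combination hsb2
        · intro h
          have h' : sb * μ = 1 := by linear_combination h
          have h'' := congrArg (sb * ·) h'
          simp only [← mul_assoc, hsb2, one_mul, mul_one] at h''
          linear_combination h''
      unfold psiAux
      rw [hmu, hpsiv, he1, zmod_val_sub_one hm0]
      rw [if_neg hxv, if_pos hxu, if_neg (show ¬ (x = v ∧ μ = 0) from fun hc => hxv hc.1)]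
      by_cases h0 : μ - sb = 0
      · rw [if_pos (show x = u ∧ μ - sb = 0 from ⟨hxu, h0⟩),
          if_pos (show sb * μ - 1 = 0 from he2.mp h0)]
        push_cast; ring
      · rw [if_neg (show ¬ (x = u ∧ μ - sb = 0) from fun hc => h0 hc.2),
          if_neg (show ¬ (sb * μ - 1 = 0) from fun hc => h0 (he2.mpr hc))]
        push_cast; ring
    · have hmu : (twist tail head n w x).mu et = μ := by
        rw [twist_mu, hs0 x hxv hxu]
        push_cast
        ring
      rw [hmu, if_neg (show ¬ (x = u ∧ μ = 0) from fun hc => hxu hc.1),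
        if_neg (show ¬ (x = v ∧ μ = 0) from fun hc => hxv hc.1),
        if_neg hxv, if_neg hxu]
      ring

lemma lemB (tail head : E → V) (n : E → ℕ)
    (hloop : Loopless tail head) (hn : ∀ e, 0 < n e) (et : E) (v : V)
    (hadj : tail et = v ∨ head et = v) :
    ∀ (l : List V) (w : AdmMD V E n),
      (n et : ℤ) * DFun tail head n w l v et
        = psiAux tail head n et v ((l.foldl (twist tail head n) w).mu et)
          - psiAux tail head n et v (w.mu et)
          - ((l.count v : ℤ) - (l.count (otherEnd tail head et v) : ℤ))
  | [], w => by simp [DFun_nil]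
  | x :: l, w => by
    rw [DFun_cons, mul_add, lemB tail head n hloop hn et v hadj l (twist tail head n w x),
      lemB_step tail head n hloop hn et v hadj w x]
    simp only [List.foldl_cons, List.count_cons]
    push_cast
    by_cases h1 : x = v <;> by_cases h2 : x = otherEnd tail head et v <;>
      simp [h1, h2] <;> ring

noncomputable def lapl (tail head : E → V) (n : E → ℕ) [Fintype V] [Fintype E] :
    (V → ℚ) →ₗ[ℚ] (V → ℚ) where
  toFun a := fun x => ∑ e, (sigma tail head e x : ℚ) * (a (tail e) - a (head e)) / (n e)
  map_add' a b := by
    funext x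
    simp only [Pi.add_apply]
    rw [← Finset.sum_add_distrib]
    refine Finset.sum_congr rfl fun e _ => by ring
  map_smul' c a := by
    funext x
    simp only [Pi.smul_apply, RingHom.id_apply, smul_eq_mul, Finset.mul_sum]
    refine Finset.sum_congr rfl fun e _ => by ring

noncomputable def sumF (V : Type*) [Fintype V] : (V → ℚ) →ₗ[ℚ] ℚ where
  toFun a := ∑ x, a x
  map_add' a b := Finset.sum_add_distrib
  map_smul' c a := by simp [Finset.mul_sum]

lemma sigma_sum_eq (tail head : E → V) (hloop : Loopless tail head) (a : V → ℚ) (e : E) :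
    ∑ x, a x * (sigma tail head e x : ℚ) = a (tail e) - a (head e) := by
  have key : ∀ x, a x * (sigma tail head e x : ℚ)
      = (if tail e = x then a x else 0) - (if head e = x then a x else 0) := by
    intro x
    unfold sigma
    by_cases ht : tail e = x
    · have hh : ¬ head e = x := fun hc => hloop e (ht.trans hc.symm)
      simp [ht, hh]
    · by_cases hh : head e = x
      · simp [ht, hh]
      · simp [ht, hh]
  rw [Finset.sum_congr rfl fun x _ => key x, Finset.sum_sub_distrib,
    Finset.sum_ite_eq, Finset.sum_ite_eq]
  simp

lemma exists_potential (tail head : E → V) (n : E → ℕ)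
    (hloop : Loopless tail head) (hconn : MGConnected tail head) (hn : ∀ e, 0 < n e)
    (v u : V) :
    ∃ a : V → ℚ, ∀ x : V,
      (∑ e, (sigma tail head e x : ℚ) * (a (tail e) - a (head e)) / (n e))
        = (if x = v then 1 else 0) - (if x = u then 1 else 0) := by
  haveI : Nonempty V := ⟨v⟩
  -- the image of lapl is contained in the kernel of sumF
  have hsub : LinearMap.range (lapl tail head n) ≤ LinearMap.ker (sumF V) := by
    rintro - ⟨a, rfl⟩
    simp only [LinearMap.mem_ker, sumF, LinearMap.coe_mk, AddHom.coe_mk, lapl]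
    rw [Finset.sum_comm]
    refine Finset.sum_eq_zero fun e _ => ?_
    have hze := sigma_sum_eq tail head hloop (fun _ => (a (tail e) - a (head e)) / (n e)) e
    simp only [sub_self] at hze
    rw [← hze]
    refine Finset.sum_congr rfl fun x _ => by ring
  -- the kernel of lapl consists of constants
  have hker : LinearMap.ker (lapl tail head n) ≤ Submodule.span ℚ {(fun _ => 1 : V → ℚ)} := by
    intro a ha
    rw [LinearMap.mem_ker] at ha
    have hquad : ∑ e, (a (tail e) - a (head e)) ^ 2 / (n e) = 0 := by
      have h0 : ∑ x, a x * (lapl tail head n a) x = 0 := by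
        rw [ha]; simp
      rw [← h0]
      simp only [lapl, LinearMap.coe_mk, AddHom.coe_mk]
      have hswap : ∑ x, a x * ∑ e, (sigma tail head e x : ℚ) * (a (tail e) - a (head e)) / (n e)
          = ∑ e, ∑ x, a x * ((sigma tail head e x : ℚ) * (a (tail e) - a (head e)) / (n e)) := by
        simp only [Finset.mul_sum]
        exact Finset.sum_comm
      rw [hswap]
      refine Finset.sum_congr rfl fun e _ => ?_
      have hs := sigma_sum_eq tail head hloop
        (fun x => a x * ((a (tail e) - a (head e)) / (n e))) e
      calc (a (tail e) - a (head e)) ^ 2 / (n e)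
          = a (tail e) * ((a (tail e) - a (head e)) / (n e))
            - a (head e) * ((a (tail e) - a (head e)) / (n e)) := by ring
        _ = ∑ x, (a x * ((a (tail e) - a (head e)) / (n e))) * (sigma tail head e x : ℚ) := hs.symm
        _ = ∑ x, a x * ((sigma tail head e x : ℚ) * (a (tail e) - a (head e)) / (n e)) :=
            Finset.sum_congr rfl fun x _ => by ring
    have hedge : ∀ e : E, a (tail e) = a (head e) := by
      intro e
      have hnn : ∀ e' ∈ (Finset.univ : Finset E),
          (0:ℚ) ≤ (a (tail e') - a (head e')) ^ 2 / (n e') :=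
        fun e' _ => div_nonneg (sq_nonneg _) (Nat.cast_nonneg _)
      have hz := (Finset.sum_eq_zero_iff_of_nonneg hnn).mp hquad e (Finset.mem_univ e)
      have hne : ((n e : ℚ)) ≠ 0 := Nat.cast_ne_zero.mpr (hn e).ne'
      rw [div_eq_zero_iff] at hz
      rcases hz with hz | hz
      · have := sq_eq_zero_iff.mp hz
        linarith [this]
      · exact absurd hz hne
    have hconst : ∀ x y : V, a x = a y := by
      intro x y
      induction hconn x y with
      | refl => rfl
      | tail hxz hstep ih =>
        obtain ⟨e, he⟩ := hstep
        rcases he with ⟨h1, h2⟩ | ⟨h1, h2⟩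
        · rw [ih, ← h1, ← h2, hedge e]
        · rw [ih, ← h1, ← h2, hedge e]
    rw [Submodule.mem_span_singleton]
    refine ⟨a v, funext fun x => ?_⟩
    simp [hconst v x]
  -- dimension count
  have hone_ne : (fun _ => 1 : V → ℚ) ≠ 0 := by
    intro hc
    have := congrFun hc v
    norm_num at this
  have hrank1 : Module.finrank ℚ (LinearMap.ker (lapl tail head n)) ≤ 1 := by
    have h1 : Module.finrank ℚ (Submodule.span ℚ {(fun _ => 1 : V → ℚ)}) = 1 :=
      finrank_span_singleton hone_ne
    exact h1 ▸ Submodule.finrank_mono hker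
  have hcardpos : 0 < Fintype.card V := Fintype.card_pos
  have hsumtop : LinearMap.range (sumF V) = ⊤ := by
    rw [LinearMap.range_eq_top]
    intro c
    refine ⟨fun _ => c / (Fintype.card V), ?_⟩
    simp only [sumF, LinearMap.coe_mk, AddHom.coe_mk, Finset.sum_const, Finset.card_univ,
      nsmul_eq_mul]
    field_simp
  have hcard : Module.finrank ℚ (V → ℚ) = Fintype.card V := by
    simp [Module.finrank_pi]
  have e1 := LinearMap.finrank_range_add_finrank_ker (lapl tail head n)
  have e2 := LinearMap.finrank_range_add_finrank_ker (sumF V)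
  rw [hcard] at e1 e2
  have hr2 : Module.finrank ℚ (LinearMap.range (sumF V)) = 1 := by
    rw [hsumtop, finrank_top, Module.finrank_self]
  rw [hr2] at e2
  have hEq : LinearMap.range (lapl tail head n) = LinearMap.ker (sumF V) :=
    Submodule.eq_of_le_of_finrank_le hsub (by omega)
  have ht : (fun x => (if x = v then (1:ℚ) else 0) - (if x = u then 1 else 0))
      ∈ LinearMap.ker (sumF V) := by
    simp [sumF, Finset.sum_sub_distrib, Finset.sum_ite_eq']
  rw [← hEq] at ht
  obtain ⟨a, haeq⟩ := ht
  refine ⟨a, fun x => ?_⟩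
  have := congrFun haeq x
  simpa [lapl] using this

lemma qval_add_one {m : ℕ} (hm : 0 < m) (μ : ZMod m) :
    (((μ + 1 : ZMod m)).val : ℚ) = (μ.val : ℚ) + 1 - m * (if μ + 1 = 0 then 1 else 0) := by
  have h := zmod_val_add_one hm μ
  split_ifs with h0
  · rw [if_pos h0] at h; exact_mod_cast h
  · rw [if_neg h0] at h; exact_mod_cast h

lemma qval_sub_one {m : ℕ} (hm : 0 < m) (μ : ZMod m) :
    (((μ - 1 : ZMod m)).val : ℚ) = (μ.val : ℚ) - 1 + m * (if μ = 0 then 1 else 0) := by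
  have h := zmod_val_sub_one hm μ
  split_ifs with h0
  · rw [if_pos h0] at h; exact_mod_cast h
  · rw [if_neg h0] at h; exact_mod_cast h

noncomputable def Phi (tail head : E → V) (n : E → ℕ) [Fintype V] [Fintype E] (a : V → ℚ)
    (w : AdmMD V E n) : ℚ :=
  (∑ x, a x * (w.wV x : ℚ))
  + ∑ e, ((((w.mu e).val : ℚ) * ((a (head e) - a (tail e)) / (n e)))
      + (if w.mu e ≠ 0 then a (tail e) else 0))

lemma phi_edge (tail head : E → V) (n : E → ℕ) (hloop : Loopless tail head)
    (hn : ∀ e, 0 < n e) (a : V → ℚ) (e : E) (x₀ : V) (μ : ZMod (n e)) :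
    (if sigma tail head e x₀ ≠ 0 ∧ μ + ((sigma tail head e x₀ : ℤ) : ZMod (n e)) = 0
        then a (otherEnd tail head e x₀) else 0)
    - (if sigma tail head e x₀ ≠ 0 ∧ μ = 0 then a x₀ else 0)
    + (((μ + ((sigma tail head e x₀ : ℤ) : ZMod (n e))).val : ℚ)
          * ((a (head e) - a (tail e)) / (n e))
        + (if μ + ((sigma tail head e x₀ : ℤ) : ZMod (n e)) ≠ 0 then a (tail e) else 0))
    - ((μ.val : ℚ) * ((a (head e) - a (tail e)) / (n e))
        + (if μ ≠ 0 then a (tail e) else 0))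
    = - ((sigma tail head e x₀ : ℚ) * (a (tail e) - a (head e)) / (n e)) := by
  have hne : ((n e : ℚ)) ≠ 0 := Nat.cast_ne_zero.mpr (hn e).ne'
  rcases sigma_cases tail head e x₀ with ⟨ht, hσ⟩ | ⟨ht, hh, hσ⟩ | ⟨ht, hh, hσ⟩
  · -- σ = 1, tail e = x₀
    have hoe : otherEnd tail head e x₀ = head e := by unfold otherEnd; rw [if_pos ht]
    have hcast : ((sigma tail head e x₀ : ℤ) : ZMod (n e)) = 1 := by rw [hσ]; push_cast; ring
    rw [hcast, hoe, hσ, ← ht, qval_add_one (hn e) μ]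
    by_cases h2 : μ = 0
    · by_cases h1 : μ + 1 = 0
      · have h3 : (1 : ZMod (n e)) = 0 := by rw [h2] at h1; simpa using h1
        simp [h1, h2, h3] <;> push_cast <;> field_simp <;> ring
      · have h3 : ¬((1 : ZMod (n e)) = 0) := by rw [h2] at h1; simpa using h1
        simp [h1, h2, h3] <;> push_cast <;> field_simp <;> ring
    · by_cases h1 : μ + 1 = 0
      · simp [h1, h2] <;> push_cast <;> field_simp <;> ring
      · simp [h1, h2] <;> push_cast <;> field_simp <;> ring
  · -- σ = -1, head e = x₀
    have hoe : otherEnd tail head e x₀ = tail e := by unfold otherEnd; rw [if_neg ht]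
    have hcast : μ + ((sigma tail head e x₀ : ℤ) : ZMod (n e)) = μ - 1 := by
      rw [hσ]; push_cast; ring
    rw [hcast, hoe, hσ, ← hh, qval_sub_one (hn e) μ]
    by_cases h2 : μ = 0
    · by_cases h1 : μ - 1 = 0
      · have h3 : (1 : ZMod (n e)) = 0 := by
          rw [h2] at h1
          simpa [neg_eq_zero] using h1
        simp [h1, h2, h3] <;> push_cast <;> field_simp <;> ring
      · have h3 : ¬((1 : ZMod (n e)) = 0) := by
          rw [h2] at h1
          simpa [neg_eq_zero] using h1
        simp [h1, h2, h3] <;> push_cast <;> field_simp <;> ring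
    · by_cases h1 : μ - 1 = 0
      · simp [h1, h2] <;> push_cast <;> field_simp <;> ring
      · simp [h1, h2] <;> push_cast <;> field_simp <;> ring
  · -- σ = 0
    have hcast : ((sigma tail head e x₀ : ℤ) : ZMod (n e)) = 0 := by rw [hσ]; push_cast; ring
    rw [hcast, hσ]
    simp

lemma sum_ite_card1 (a : V → ℚ) (x₀ : V) (p : E → Prop) [DecidablePred p] :
    ∑ x, a x * (if x = x₀ then ((Finset.univ.filter p).card : ℚ) else 0)
      = ∑ e, (if p e then a x₀ else 0) := by
  simp only [mul_ite, mul_zero]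
  rw [Finset.sum_ite_eq' Finset.univ x₀ (fun x => a x * ((Finset.univ.filter p).card : ℚ))]
  simp only [Finset.mem_univ, if_true, Finset.card_filter]
  push_cast
  rw [Finset.mul_sum]
  refine Finset.sum_congr rfl fun e _ => by
    by_cases hp : p e <;> simp [hp]

lemma sum_ite_card2 (a : V → ℚ) (f : E → V) (p : E → Prop) [DecidablePred p] :
    ∑ x, a x * ((Finset.univ.filter fun e => p e ∧ f e = x).card : ℚ)
      = ∑ e, (if p e then a (f e) else 0) := by
  simp only [Finset.card_filter]
  push_cast
  simp only [Finset.mul_sum, mul_ite, mul_one, mul_zero]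
  rw [Finset.sum_comm]
  refine Finset.sum_congr rfl fun e _ => ?_
  by_cases hp : p e
  · simp only [hp, true_and]
    rw [Finset.sum_ite_eq Finset.univ (f e) a]
    simp
  · simp [hp]

lemma Phi_twist (tail head : E → V) (n : E → ℕ) (hloop : Loopless tail head)
    (hn : ∀ e, 0 < n e) (a : V → ℚ) (w : AdmMD V E n) (x₀ : V) :
    Phi tail head n a (twist tail head n w x₀)
      = Phi tail head n a w
        - ∑ e, (sigma tail head e x₀ : ℚ) * (a (tail e) - a (head e)) / (n e) := by
  unfold Phi
  have hwV : ∀ x, ((twist tail head n w x₀).wV x : ℚ)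
      = (w.wV x : ℚ)
        - (if x = x₀ then ((Finset.univ.filter fun e : E =>
            sigma tail head e x₀ ≠ 0 ∧ w.mu e = 0).card : ℚ) else 0)
        + ((Finset.univ.filter fun e : E => sigma tail head e x₀ ≠ 0 ∧
            w.mu e + ((sigma tail head e x₀ : ℤ) : ZMod (n e)) = 0 ∧
            otherEnd tail head e x₀ = x).card : ℚ) := by
    intro x
    simp only [twist]
    push_cast [apply_ite (fun z : ℤ => (z : ℚ))]
    ring
  have hsplit : ∑ x, a x * ((twist tail head n w x₀).wV x : ℚ)
      = (∑ x, a x * (w.wV x : ℚ))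
        - (∑ e, (if sigma tail head e x₀ ≠ 0 ∧ w.mu e = 0 then a x₀ else 0))
        + (∑ e, (if sigma tail head e x₀ ≠ 0 ∧
            w.mu e + ((sigma tail head e x₀ : ℤ) : ZMod (n e)) = 0
            then a (otherEnd tail head e x₀) else 0)) := by
    rw [← sum_ite_card1 a x₀ (fun e => sigma tail head e x₀ ≠ 0 ∧ w.mu e = 0),
      ← sum_ite_card2 a (fun e => otherEnd tail head e x₀)
        (fun e => sigma tail head e x₀ ≠ 0 ∧
          w.mu e + ((sigma tail head e x₀ : ℤ) : ZMod (n e)) = 0)]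
    rw [← Finset.sum_sub_distrib, ← Finset.sum_add_distrib]
    refine Finset.sum_congr rfl fun x _ => ?_
    have hfilter : (Finset.univ.filter fun e : E => (sigma tail head e x₀ ≠ 0 ∧
            w.mu e + ((sigma tail head e x₀ : ℤ) : ZMod (n e)) = 0) ∧
            otherEnd tail head e x₀ = x)
        = (Finset.univ.filter fun e : E => sigma tail head e x₀ ≠ 0 ∧
            w.mu e + ((sigma tail head e x₀ : ℤ) : ZMod (n e)) = 0 ∧
            otherEnd tail head e x₀ = x) := by
      refine Finset.filter_congr fun e _ => by tauto
    rw [hwV x, hfilter]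
    ring
  rw [hsplit]
  simp only [twist_mu]
  have key : (∑ e, (if sigma tail head e x₀ ≠ 0 ∧
        w.mu e + ((sigma tail head e x₀ : ℤ) : ZMod (n e)) = 0
        then a (otherEnd tail head e x₀) else 0))
      - (∑ e, (if sigma tail head e x₀ ≠ 0 ∧ w.mu e = 0 then a x₀ else 0))
      + (∑ e, (((w.mu e + ((sigma tail head e x₀ : ℤ) : ZMod (n e))).val : ℚ)
            * ((a (head e) - a (tail e)) / (n e))
          + (if w.mu e + ((sigma tail head e x₀ : ℤ) : ZMod (n e)) ≠ 0
              then a (tail e) else 0)))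
      - (∑ e, (((w.mu e).val : ℚ) * ((a (head e) - a (tail e)) / (n e))
          + (if w.mu e ≠ 0 then a (tail e) else 0)))
      = ∑ e, - ((sigma tail head e x₀ : ℚ) * (a (tail e) - a (head e)) / (n e)) := by
    rw [← Finset.sum_sub_distrib, ← Finset.sum_add_distrib, ← Finset.sum_sub_distrib]
    exact Finset.sum_congr rfl fun e _ => phi_edge tail head n hloop hn a e x₀ (w.mu e)
  rw [Finset.sum_neg_distrib] at key
  have fin : (∑ x, a x * (w.wV x : ℚ))
        - (∑ e, (if sigma tail head e x₀ ≠ 0 ∧ w.mu e = 0 then a x₀ else 0))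
        + (∑ e, (if sigma tail head e x₀ ≠ 0 ∧
            w.mu e + ((sigma tail head e x₀ : ℤ) : ZMod (n e)) = 0
            then a (otherEnd tail head e x₀) else 0))
        + (∑ e, (((w.mu e + ((sigma tail head e x₀ : ℤ) : ZMod (n e))).val : ℚ)
              * ((a (head e) - a (tail e)) / (n e))
            + (if w.mu e + ((sigma tail head e x₀ : ℤ) : ZMod (n e)) ≠ 0
                then a (tail e) else 0)))
      = (∑ x, a x * (w.wV x : ℚ))
        + (∑ e, (((w.mu e).val : ℚ) * ((a (head e) - a (tail e)) / (n e))
            + (if w.mu e ≠ 0 then a (tail e) else 0)))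
        - ∑ e, (sigma tail head e x₀ : ℚ) * (a (tail e) - a (head e)) / (n e) := by
    linarith [key]
  exact fin

lemma count_cons_q (x y : V) (l : List V) [DecidableEq V] :
    (((x :: l).count y : ℚ)) = (l.count y : ℚ) + (if x = y then 1 else 0) := by
  rcases eq_or_ne x y with h | h
  · subst h; simp [List.count_cons_self]
  · simp [List.count_cons_of_ne h.symm, h]

lemma count_diff_eq (tail head : E → V) (n : E → ℕ)
    (hloop : Loopless tail head) (hconn : MGConnected tail head) (hn : ∀ e, 0 < n e)
    (v u : V) (w : AdmMD V E n) (l₁ l₂ : List V)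
    (hend : l₁.foldl (twist tail head n) w = l₂.foldl (twist tail head n) w) :
    (l₁.count v : ℤ) - (l₁.count u : ℤ) = (l₂.count v : ℤ) - (l₂.count u : ℤ) := by
  obtain ⟨a, ha⟩ := exists_potential tail head n hloop hconn hn v u
  have hfold : ∀ (l : List V) (w : AdmMD V E n),
      Phi tail head n a (l.foldl (twist tail head n) w)
        = Phi tail head n a w - ((l.count v : ℚ) - (l.count u : ℚ)) := by
    intro l
    induction l with
    | nil => intro w; simp
    | cons x l ih =>
      intro w
      rw [List.foldl_cons, ih (twist tail head n w x),
        Phi_twist tail head n hloop hn a w x, ha x, count_cons_q, count_cons_q]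
      ring
  have hq1 := hfold l₁ w
  have hq2 := hfold l₂ w
  rw [hend] at hq1
  rw [hq1] at hq2
  have hq : ((l₁.count v : ℚ) - (l₁.count u : ℚ)) = ((l₂.count v : ℚ) - (l₂.count u : ℚ)) := by
    linarith
  exact_mod_cast hq

end FG2

end FG

end Aux12

/-- the function `D_{w,v}` is independent of the choice of path from `w`
to `w_v`. -/
theorem statement_12 {V E : Type*} [Fintype V] [Fintype E] [DecidableEq V] [DecidableEq E]
    (tail head : E → V) (n : E → ℕ)
    (hloop : Loopless tail head) (hconn : MGConnected tail head)
    (hn : ∀ e, 0 < n e)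
    (w₀ : AdmMD V E n) (wv : V → AdmMD V E n)
    (hwv : ∀ v : V, TwistSeq tail head n w₀ (wv v) ∧ Concentrated tail head n (wv v) v)
    (w : AdmMD V E n) (hw : TwistSeq tail head n w₀ w)
    (v : V) (l₁ l₂ : List V)
    (h₁ : l₁.foldl (twist tail head n) w = wv v)
    (h₂ : l₂.foldl (twist tail head n) w = wv v)
    (et : E) (hadj : tail et = v ∨ head et = v) :
    DFun tail head n w l₁ v et = DFun tail head n w l₂ v et := by
  have k1 := lemB tail head n hloop hn et v hadj l₁ w
  have k2 := lemB tail head n hloop hn et v hadj l₂ w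
  rw [h₁] at k1
  rw [h₂] at k2
  have hc := count_diff_eq tail head n hloop hconn hn v (otherEnd tail head et v) w l₁ l₂
    (by rw [h₁, h₂])
  have hmul : (n et : ℤ) * DFun tail head n w l₁ v et
      = (n et : ℤ) * DFun tail head n w l₂ v et := by linarith
  have hne : ((n et : ℤ)) ≠ 0 := by
    have := hn et
    omega
  exact mul_left_cancel₀ hne hmul

end LLS
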